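/- arXiv:2501.16232 — 12 statements merged into one kernel-verified Lean document; each statement's English description precedes it below -/
import Mathlib

section
/- Let a, b, c be real numbers with a ≤ b ≤ c and a + b + c = 0. Then a³ + b³ + c³ ≤ (1/√6)·(a² + b² + c²)^{3/2}. -/
theorem cubic_trace_upper_bound (a b c : ℝ) (hab : a ≤ b) (hbc : b ≤ c)
    (hsum : a + b + c = 0) :
    a ^ 3 + b ^ 3 + c ^ 3 ≤ (1 / Real.sqrt 6) * (a ^ 2 + b ^ 2 + c ^ 2) ^ ((3 : ℝ) / 2) := by
  set s : ℝ := a ^ 2 + b ^ 2 + c ^ 2 with hs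
  have hs0 : 0 ≤ s := by positivity
  have hrpow : s ^ ((3 : ℝ) / 2) = Real.sqrt (s ^ 3) := by
    rw [Real.sqrt_eq_rpow, ← Real.rpow_natCast s 3, ← Real.rpow_mul hs0]
    norm_num
  have hc : c = -a - b := by linarith
  have hlhs : a ^ 3 + b ^ 3 + c ^ 3 = 3 * (a * b * c) := by rw [hc]; ring
  have hkey : (3 * (a * b * c)) ^ 2 ≤ s ^ 3 / 6 := by
    rw [hs, hc]
    nlinarith [sq_nonneg (a - b), sq_nonneg (a + b), sq_nonneg (a * b), sq_nonneg a,
      sq_nonneg b, sq_nonneg (a + 2 * b), sq_nonneg (2 * a + b),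
      sq_nonneg ((a - b) * (a + b)), sq_nonneg (a * a - b * b), sq_nonneg (a * b * (a + b)),
      sq_nonneg ((a - b) * (a + 2 * b)), sq_nonneg ((a - b) * (2 * a + b))]
  have hrhs : (1 / Real.sqrt 6) * Real.sqrt (s ^ 3) = Real.sqrt (s ^ 3 / 6) := by
    rw [Real.sqrt_div (by positivity : (0:ℝ) ≤ s ^ 3) 6]
    ring
  rw [hrpow, hrhs, hlhs]
  rcases le_or_gt (3 * (a * b * c)) 0 with h | h
  · exact h.trans (Real.sqrt_nonneg _)
  · exact (Real.le_sqrt h.le (by positivity)).mpr hkey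
end

section
/- Let a, b, c be real numbers with a ≤ b ≤ c and a + b + c = 0. Then a³ + b³ + c³ ≥ −(1/√6)·(a² + b² + c²)^{3/2}. -/
theorem cubic_trace_lower_bound (a b c : ℝ) (hab : a ≤ b) (hbc : b ≤ c)
    (hsum : a + b + c = 0) :
    a ^ 3 + b ^ 3 + c ^ 3 ≥ -(1 / Real.sqrt 6) * (a ^ 2 + b ^ 2 + c ^ 2) ^ ((3 : ℝ) / 2) := by
  set s : ℝ := a ^ 2 + b ^ 2 + c ^ 2 with hs
  have hs0 : 0 ≤ s := by positivity
  have hrpow : s ^ ((3 : ℝ) / 2) = Real.sqrt (s ^ 3) := by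
    rw [Real.sqrt_eq_rpow, ← Real.rpow_natCast s 3, ← Real.rpow_mul hs0]
    norm_num
  rw [hrpow]
  have hc : c = -(a + b) := by linarith
  have key : (a ^ 3 + b ^ 3 + c ^ 3) ^ 2 ≤ s ^ 3 / 6 := by
    rw [hc, hs, hc]
    nlinarith [sq_nonneg ((a - b) * (a + 2 * b) * (2 * a + b))]
  have habs : |a ^ 3 + b ^ 3 + c ^ 3| ≤ Real.sqrt (s ^ 3 / 6) := by
    rw [← Real.sqrt_sq_eq_abs]
    exact Real.sqrt_le_sqrt key
  have hdiv : Real.sqrt (s ^ 3 / 6) = Real.sqrt (s ^ 3) / Real.sqrt 6 := by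
    rw [Real.sqrt_div (by positivity : (0:ℝ) ≤ s ^ 3)]
  have heq : (1 / Real.sqrt 6) * Real.sqrt (s ^ 3) = Real.sqrt (s ^ 3) / Real.sqrt 6 := by
    ring
  have := neg_abs_le (a ^ 3 + b ^ 3 + c ^ 3)
  linarith
end

section
/- Let a, b, c be real numbers with a ≤ b ≤ c and a + b + c = 0. Then a³ + b³ + c³ = (1/√6)·(a² + b² + c²)^{3/2} if and only if a = b = −c/2. -/
theorem cubic_trace_upper_equality (a b c : ℝ) (hab : a ≤ b) (hbc : b ≤ c)
    (hsum : a + b + c = 0) :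
    a ^ 3 + b ^ 3 + c ^ 3 = (1 / Real.sqrt 6) * (a ^ 2 + b ^ 2 + c ^ 2) ^ ((3 : ℝ) / 2) ↔
      a = b ∧ b = -c / 2 := by
  have hs : (0:ℝ) ≤ a ^ 2 + b ^ 2 + c ^ 2 := by positivity
  have h6 : Real.sqrt 6 ^ 2 = 6 := Real.sq_sqrt (by norm_num)
  have h6pos : (0:ℝ) < Real.sqrt 6 := Real.sqrt_pos.mpr (by norm_num)
  have h6ne : Real.sqrt 6 ≠ 0 := ne_of_gt h6pos
  have ht0 : 0 ≤ Real.sqrt (a ^ 2 + b ^ 2 + c ^ 2) := Real.sqrt_nonneg _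
  have ht2 : Real.sqrt (a ^ 2 + b ^ 2 + c ^ 2) ^ 2 = a ^ 2 + b ^ 2 + c ^ 2 :=
    Real.sq_sqrt hs
  have hrpow : (a ^ 2 + b ^ 2 + c ^ 2) ^ ((3 : ℝ) / 2)
      = Real.sqrt (a ^ 2 + b ^ 2 + c ^ 2) ^ 3 := by
    rw [show (3:ℝ)/2 = (1/2)*3 by ring, Real.rpow_mul hs, ← Real.sqrt_eq_rpow,
      show ((3:ℝ)) = ((3:ℕ):ℝ) by norm_num, Real.rpow_natCast]
  rw [hrpow]
  set t : ℝ := Real.sqrt (a ^ 2 + b ^ 2 + c ^ 2) with htdef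
  clear_value t
  have h3 : a ^ 3 + b ^ 3 + c ^ 3 = 3 * (a * b * c) := by
    linear_combination (a ^ 2 + b ^ 2 + c ^ 2 - a * b - b * c - a * c) * hsum
  constructor
  · intro h
    have hcube : t ^ 3 = Real.sqrt 6 * (3 * (a * b * c)) := by
      rw [← h3, h]; field_simp
    have habc : 0 ≤ a * b * c := by
      by_contra hneg
      push_neg at hneg
      have h1 : Real.sqrt 6 * (3 * (a * b * c)) < 0 :=
        mul_neg_of_pos_of_neg h6pos (by linarith)
      have h2 : 0 ≤ t ^ 3 := pow_nonneg ht0 3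
      linarith [hcube ▸ h2]
    have heq : (a ^ 2 + b ^ 2 + c ^ 2) ^ 3 = 54 * (a * b * c) ^ 2 := by
      have e1 : (t ^ 3) ^ 2 = 6 * (3 * (a * b * c)) ^ 2 := by
        rw [hcube, mul_pow, h6]
      have e2 : (t ^ 2) ^ 3 = (a ^ 2 + b ^ 2 + c ^ 2) ^ 3 := by rw [ht2]
      nlinarith [e1, e2]
    have hc : c = -(a + b) := by linarith
    subst hc
    have key : ((a - b) * (2 * b + a) * (2 * a + b)) ^ 2 = 0 := by
      linear_combination heq / 2
    have key' : (a - b) * (2 * b + a) * (2 * a + b) = 0 :=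
      pow_eq_zero_iff (by norm_num) |>.mp key
    have hab' : a = b := by
      rcases mul_eq_zero.mp key' with h' | h'
      · rcases mul_eq_zero.mp h' with h'' | h''
        · linarith
        · -- 2b + a = 0, i.e. b = c case
          have hb' : 0 ≤ b := by linarith
          rcases eq_or_lt_of_le hb' with h0 | h0
          · linarith
          · exfalso; nlinarith [habc, mul_pos (mul_pos h0 h0) h0]
      · -- 2a + b = 0, i.e. a = c case
        linarith
    exact ⟨hab', by linarith⟩
  · rintro ⟨hab', hb⟩
    have ha : a = -c / 2 := hab' ▸ hb
    have hc0 : 0 ≤ c := by linarith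
    have hx : (Real.sqrt 6 * c / 2) ^ 2 = a ^ 2 + b ^ 2 + c ^ 2 := by
      rw [ha, hb]; linear_combination (c ^ 2 / 4) * h6
    have htval : t = Real.sqrt 6 * c / 2 := by
      rw [htdef, ← hx, Real.sqrt_sq (by positivity)]
    rw [ha, hb, htval]
    field_simp
    linear_combination (-c^3) * h6
end

section
/- Let a, b, c be real numbers with a ≤ b ≤ c and a + b + c = 0. Then a³ + b³ + c³ = −(1/√6)·(a² + b² + c²)^{3/2} if and only if b = c = −a/2. -/
theorem cubic_trace_lower_equality (a b c : ℝ) (hab : a ≤ b) (hbc : b ≤ c)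
    (hsum : a + b + c = 0) :
    a ^ 3 + b ^ 3 + c ^ 3 = -(1 / Real.sqrt 6) * (a ^ 2 + b ^ 2 + c ^ 2) ^ ((3 : ℝ) / 2) ↔
      b = c ∧ c = -a / 2 := by
  have ha : a = -b - c := by linarith
  have hS : (0:ℝ) ≤ a ^ 2 + b ^ 2 + c ^ 2 := by positivity
  have h6 : (0:ℝ) < Real.sqrt 6 := Real.sqrt_pos.mpr (by norm_num)
  have hrw : (a ^ 2 + b ^ 2 + c ^ 2) ^ ((3 : ℝ) / 2)
      = Real.sqrt (a ^ 2 + b ^ 2 + c ^ 2) ^ 3 := by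
    rw [← Real.rpow_natCast (Real.sqrt _) 3, Real.sqrt_eq_rpow, ← Real.rpow_mul hS]
    norm_num
  set s := Real.sqrt (a ^ 2 + b ^ 2 + c ^ 2) with hs
  have hs0 : 0 ≤ s := Real.sqrt_nonneg _
  have hs2 : s ^ 2 = a ^ 2 + b ^ 2 + c ^ 2 := Real.sq_sqrt hS
  have h6sq : Real.sqrt 6 ^ 2 = 6 := Real.sq_sqrt (by norm_num)
  rw [hrw]
  constructor
  · intro h
    have hT : Real.sqrt 6 * (a ^ 3 + b ^ 3 + c ^ 3) = -(s ^ 3) := by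
      rw [h]; field_simp
    have hTsq : 6 * (a ^ 3 + b ^ 3 + c ^ 3) ^ 2 = (a ^ 2 + b ^ 2 + c ^ 2) ^ 3 :=
      calc 6 * (a ^ 3 + b ^ 3 + c ^ 3) ^ 2
          = Real.sqrt 6 ^ 2 * (a ^ 3 + b ^ 3 + c ^ 3) ^ 2 := by rw [h6sq]
        _ = (Real.sqrt 6 * (a ^ 3 + b ^ 3 + c ^ 3)) ^ 2 := by ring
        _ = (-(s ^ 3)) ^ 2 := by rw [hT]
        _ = (s ^ 2) ^ 3 := by ring
        _ = (a ^ 2 + b ^ 2 + c ^ 2) ^ 3 := by rw [hs2]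
    have hTle : a ^ 3 + b ^ 3 + c ^ 3 ≤ 0 := by
      nlinarith [pow_nonneg hs0 3, h6]
    rw [ha] at hTsq
    have hX2 : ((b - c) * (2 * b + c) * (b + 2 * c)) ^ 2 = 0 := by
      linear_combination (-1/2 : ℝ) * hTsq
    have hprod : (b - c) * (2 * b + c) * (b + 2 * c) = 0 :=
      pow_eq_zero_iff two_ne_zero |>.mp hX2
    rcases mul_eq_zero.mp hprod with h1 | h3
    · rcases mul_eq_zero.mp h1 with h1 | h2
      · exact ⟨by linarith, by linarith⟩
      · -- c = -2b, a = b ; need b = 0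
        have hc' : c = -2 * b := by linarith
        have ha' : a = b := by linarith
        rw [ha', hc'] at hTle
        have hb3 : 0 ≤ b ^ 3 := by nlinarith [hTle]
        have hbnn : 0 ≤ b := (Odd.pow_nonneg_iff (⟨1, by norm_num⟩ : Odd 3)).mp hb3
        have hb0 : b = 0 := le_antisymm (by linarith) hbnn
        exact ⟨by linarith, by linarith⟩
    · -- b = -2c, a = c
      have hc0 : c = 0 := by linarith
      exact ⟨by linarith, by linarith⟩
  · rintro ⟨hbc', hca⟩
    have hc : a = -2 * c := by linarith
    have hcpos : 0 ≤ c := by linarith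
    have hssq : s = Real.sqrt 6 * c := by
      rw [hs, hbc', hc]
      rw [show (-2 * c) ^ 2 + c ^ 2 + c ^ 2 = 6 * c ^ 2 by ring,
        Real.sqrt_mul (by norm_num), Real.sqrt_sq hcpos]
    rw [hssq, hbc', hc]
    have hcube : (Real.sqrt 6 * c) ^ 3 = 6 * Real.sqrt 6 * c ^ 3 := by
      rw [mul_pow, pow_succ, h6sq]
    rw [hcube]
    field_simp
    ring
end

section
/- Let λ₁, λ₂, λ₃, λ₄ be real numbers with λ₁ + λ₂ + λ₃ + λ₄ = 0 and λ₁·λ₂·λ₃·λ₄ = 0. Then |λ₁³ + λ₂³ + λ₃³ + λ₄³| ≤ (1/√6)·(λ₁² + λ₂² + λ₃² + λ₄²)^{3/2}. -/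
theorem key3 (a b c : ℝ) (h : a + b + c = 0) :
    |a ^ 3 + b ^ 3 + c ^ 3| ≤
      (1 / Real.sqrt 6) * (a ^ 2 + b ^ 2 + c ^ 2) ^ ((3 : ℝ) / 2) := by
  have hS : (0:ℝ) ≤ a ^ 2 + b ^ 2 + c ^ 2 := by positivity
  have hc : c = -(a + b) := by linarith
  subst hc
  have hcube : a ^ 3 + b ^ 3 + (-(a+b)) ^ 3 = 3 * (a * b * (-(a+b))) := by ring
  have hineq : (3 * (a * b * (-(a+b)))) ^ 2 ≤ (a ^ 2 + b ^ 2 + (-(a+b)) ^ 2) ^ 3 / 6 := by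
    nlinarith [sq_nonneg ((a - b) * (2*a + b) * (a + 2*b))]
  have hrpow : (a ^ 2 + b ^ 2 + (-(a+b)) ^ 2) ^ ((3:ℝ)/2)
      = Real.sqrt ((a ^ 2 + b ^ 2 + (-(a+b)) ^ 2) ^ 3) := by
    rw [Real.sqrt_eq_rpow, ← Real.rpow_natCast (a ^ 2 + b ^ 2 + (-(a+b)) ^ 2) 3,
      ← Real.rpow_mul hS]
    norm_num
  rw [hcube, hrpow]
  calc |3 * (a * b * (-(a+b)))|
      = Real.sqrt ((3 * (a * b * (-(a+b)))) ^ 2) := (Real.sqrt_sq_eq_abs _).symm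
    _ ≤ Real.sqrt ((a ^ 2 + b ^ 2 + (-(a+b)) ^ 2) ^ 3 / 6) := Real.sqrt_le_sqrt (by linarith)
    _ = 1 / Real.sqrt 6 * Real.sqrt ((a ^ 2 + b ^ 2 + (-(a+b)) ^ 2) ^ 3) := by
        rw [div_eq_mul_inv, Real.sqrt_mul (by positivity), Real.sqrt_inv]
        ring

theorem f3_bound_four_curvatures (l1 l2 l3 l4 : ℝ)
    (hsum : l1 + l2 + l3 + l4 = 0) (hprod : l1 * l2 * l3 * l4 = 0) :
    |l1 ^ 3 + l2 ^ 3 + l3 ^ 3 + l4 ^ 3| ≤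
      (1 / Real.sqrt 6) * (l1 ^ 2 + l2 ^ 2 + l3 ^ 2 + l4 ^ 2) ^ ((3 : ℝ) / 2) := by
  have h := mul_eq_zero.mp hprod
  rcases h with h | h4
  · rcases mul_eq_zero.mp h with h | h3
    · rcases mul_eq_zero.mp h with h1 | h2
      · subst h1
        have k := key3 l2 l3 l4 (by linarith)
        calc |(0:ℝ) ^ 3 + l2 ^ 3 + l3 ^ 3 + l4 ^ 3| = |l2 ^ 3 + l3 ^ 3 + l4 ^ 3| := by
              norm_num
          _ ≤ _ := k.trans_eq (by norm_num)
      · subst h2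
        have k := key3 l1 l3 l4 (by linarith)
        calc |l1 ^ 3 + (0:ℝ) ^ 3 + l3 ^ 3 + l4 ^ 3| = |l1 ^ 3 + l3 ^ 3 + l4 ^ 3| := by
              norm_num
          _ ≤ _ := k.trans_eq (by norm_num)
    · subst h3
      have k := key3 l1 l2 l4 (by linarith)
      calc |l1 ^ 3 + l2 ^ 3 + (0:ℝ) ^ 3 + l4 ^ 3| = |l1 ^ 3 + l2 ^ 3 + l4 ^ 3| := by
            norm_num
        _ ≤ _ := k.trans_eq (by norm_num)
  · subst h4
    have k := key3 l1 l2 l3 (by linarith)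
    calc |l1 ^ 3 + l2 ^ 3 + l3 ^ 3 + (0:ℝ) ^ 3| = |l1 ^ 3 + l2 ^ 3 + l3 ^ 3| := by
          norm_num
      _ ≤ _ := k.trans_eq (by norm_num)
end

section
/- Let λ₁ ≤ λ₂ ≤ λ₃ ≤ λ₄ be real numbers with λ₁ + λ₂ + λ₃ + λ₄ = 0, λ₁·λ₂·λ₃·λ₄ = 0, not all λᵢ zero, and λ₁³ + λ₂³ + λ₃³ + λ₄³ = (1/√6)·(λ₁² + λ₂² + λ₃² + λ₄²)^{3/2}. Then there exists a real number λ > 0 such that λ₁ = λ₂ = −λ, λ₃ = 0 and λ₄ = 2λ. -/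
/-- Equality case for three reals summing to zero. -/
lemma f3_key (x y z : ℝ) (hs : x + y + z = 0) (hp : 0 ≤ x * y * z)
    (h54 : (x ^ 2 + y ^ 2 + z ^ 2) ^ 3 = 54 * (x * y * z) ^ 2)
    (hne : ¬(x = 0 ∧ y = 0 ∧ z = 0)) :
    (x = y ∧ z = -2 * x ∧ x < 0) ∨ (y = z ∧ x = -2 * y ∧ y < 0) ∨
      (x = z ∧ y = -2 * x ∧ x < 0) := by
  have hz : z = -x - y := by linarith
  subst hz
  have hD : ((x - y) * (y - (-x - y)) * ((-x - y) - x)) ^ 2 = 0 := by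
    linear_combination h54 / 2
  have hD0 : (x - y) * (y - (-x - y)) * ((-x - y) - x) = 0 := by
    exact pow_eq_zero_iff (by norm_num) |>.mp hD
  rcases mul_eq_zero.mp hD0 with h | h
  · rcases mul_eq_zero.mp h with h | h
    · -- x = y
      have hxy : x = y := by linarith
      subst hxy
      have hx0 : x ≤ 0 := by
        by_contra hc
        push_neg at hc
        nlinarith [mul_pos (mul_pos hc hc) hc]
      have hxne : x ≠ 0 := by
        intro h0; exact hne ⟨h0, h0, by rw [h0]; ring⟩
      exact Or.inl ⟨rfl, by ring, lt_of_le_of_ne hx0 hxne⟩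
    · -- y = z
      have hyz : y = -x - y := by linarith
      have hx : x = -2 * y := by linarith
      subst hx
      have hy0 : y ≤ 0 := by
        by_contra hc
        push_neg at hc
        nlinarith [mul_pos (mul_pos hc hc) hc]
      have hyne : y ≠ 0 := by
        intro h0; exact hne ⟨by rw [h0]; ring, h0, by rw [h0]; ring⟩
      exact Or.inr (Or.inl ⟨by linarith, rfl, lt_of_le_of_ne hy0 hyne⟩)
  · -- z = x
    have hzx : -x - y = x := by linarith
    have hy : y = -2 * x := by linarith
    subst hy
    have hx0 : x ≤ 0 := by
      by_contra hc
      push_neg at hc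
      nlinarith [mul_pos (mul_pos hc hc) hc]
    have hxne : x ≠ 0 := by
      intro h0; exact hne ⟨h0, by rw [h0]; ring, by rw [h0]; ring⟩
    exact Or.inr (Or.inr ⟨by linarith, rfl, lt_of_le_of_ne hx0 hxne⟩)

theorem f3_max_case (l1 l2 l3 l4 : ℝ)
    (h12 : l1 ≤ l2) (h23 : l2 ≤ l3) (h34 : l3 ≤ l4)
    (hsum : l1 + l2 + l3 + l4 = 0) (hprod : l1 * l2 * l3 * l4 = 0)
    (hne : ¬(l1 = 0 ∧ l2 = 0 ∧ l3 = 0 ∧ l4 = 0))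
    (heq : l1 ^ 3 + l2 ^ 3 + l3 ^ 3 + l4 ^ 3 =
      (1 / Real.sqrt 6) * (l1 ^ 2 + l2 ^ 2 + l3 ^ 2 + l4 ^ 2) ^ ((3 : ℝ) / 2)) :
    ∃ l : ℝ, 0 < l ∧ l1 = -l ∧ l2 = -l ∧ l3 = 0 ∧ l4 = 2 * l := by
  have hs4 : (0:ℝ) ≤ l1 ^ 2 + l2 ^ 2 + l3 ^ 2 + l4 ^ 2 := by positivity
  have hsq : ((l1 ^ 2 + l2 ^ 2 + l3 ^ 2 + l4 ^ 2) ^ ((3:ℝ)/2)) ^ 2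
      = (l1 ^ 2 + l2 ^ 2 + l3 ^ 2 + l4 ^ 2) ^ 3 := by
    rw [← Real.rpow_natCast ((l1 ^ 2 + l2 ^ 2 + l3 ^ 2 + l4 ^ 2) ^ ((3:ℝ)/2)) 2,
      ← Real.rpow_mul hs4]
    norm_num
  have h6 : Real.sqrt 6 ^ 2 = 6 := Real.sq_sqrt (by norm_num)
  have h6pos : (0:ℝ) < Real.sqrt 6 := Real.sqrt_pos.mpr (by norm_num)
  have hc0 : 0 ≤ l1 ^ 3 + l2 ^ 3 + l3 ^ 3 + l4 ^ 3 := by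
    rw [heq]
    exact mul_nonneg (by positivity) (Real.rpow_nonneg hs4 _)
  have hc2 : 6 * (l1 ^ 3 + l2 ^ 3 + l3 ^ 3 + l4 ^ 3) ^ 2
      = (l1 ^ 2 + l2 ^ 2 + l3 ^ 2 + l4 ^ 2) ^ 3 := by
    rw [heq, mul_pow, ← hsq]
    field_simp
    rw [h6]
  clear heq hsq
  rcases mul_eq_zero.mp hprod with h | h4
  · rcases mul_eq_zero.mp h with h | h3
    · rcases mul_eq_zero.mp h with h1 | h2
      · -- l1 = 0 : all nonneg, sum zero ⇒ all zero
        exact absurd ⟨h1, by linarith, by linarith, by linarith⟩ hne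
      · -- l2 = 0
        subst h2
        have hxyz : l1 ^ 3 + 0 ^ 3 + l3 ^ 3 + l4 ^ 3 = 3 * (l1 * l3 * l4) := by
          linear_combination (l1 ^ 2 + l3 ^ 2 + l4 ^ 2 - l1 * l3 - l3 * l4 - l1 * l4) * hsum
        rw [hxyz] at hc0 hc2
        have hp : 0 ≤ l1 * l3 * l4 := by linarith
        have h54 : (l1 ^ 2 + l3 ^ 2 + l4 ^ 2) ^ 3 = 54 * (l1 * l3 * l4) ^ 2 := by
          linear_combination -hc2
        have hne' : ¬(l1 = 0 ∧ l3 = 0 ∧ l4 = 0) := fun ⟨a, b, c⟩ => hne ⟨a, rfl, b, c⟩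
        rcases f3_key l1 l3 l4 (by linarith) hp h54 hne' with
          ⟨h1, _, hlt⟩ | ⟨h1, _, hlt⟩ | ⟨h1, _, hlt⟩ <;> linarith
    · -- l3 = 0
      subst h3
      have hxyz : l1 ^ 3 + l2 ^ 3 + 0 ^ 3 + l4 ^ 3 = 3 * (l1 * l2 * l4) := by
        linear_combination (l1 ^ 2 + l2 ^ 2 + l4 ^ 2 - l1 * l2 - l2 * l4 - l1 * l4) * hsum
      rw [hxyz] at hc0 hc2
      have hp : 0 ≤ l1 * l2 * l4 := by linarith
      have h54 : (l1 ^ 2 + l2 ^ 2 + l4 ^ 2) ^ 3 = 54 * (l1 * l2 * l4) ^ 2 := by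
        linear_combination -hc2
      have hne' : ¬(l1 = 0 ∧ l2 = 0 ∧ l4 = 0) := fun ⟨a, b, c⟩ => hne ⟨a, b, rfl, c⟩
      rcases f3_key l1 l2 l4 (by linarith) hp h54 hne' with
        ⟨h1, h2, hlt⟩ | ⟨h1, h2, hlt⟩ | ⟨h1, h2, hlt⟩
      · exact ⟨-l1, by linarith, by ring, by linarith, rfl, by linarith⟩
      · linarith
      · linarith
  · -- l4 = 0 : all nonpos
    exact absurd ⟨by linarith, by linarith, by linarith, h4⟩ hne
end

section
/- Let λ₁ ≤ λ₂ ≤ λ₃ ≤ λ₄ be real numbers with λ₁ + λ₂ + λ₃ + λ₄ = 0, λ₁·λ₂·λ₃·λ₄ = 0, not all λᵢ zero, and λ₁³ + λ₂³ + λ₃³ + λ₄³ = −(1/√6)·(λ₁² + λ₂² + λ₃² + λ₄²)^{3/2}. Then there exists a real number λ > 0 such that λ₁ = −2λ, λ₂ = 0 and λ₃ = λ₄ = λ. -/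
set_option maxHeartbeats 1000000 in
lemma triple_case (x y z : ℝ) (hxy : x ≤ y) (hyz : y ≤ z)
    (hsum : x + y + z = 0) (hS : 0 < x ^ 2 + y ^ 2 + z ^ 2)
    (heq : x ^ 3 + y ^ 3 + z ^ 3 =
      -((1 / Real.sqrt 6) * (x ^ 2 + y ^ 2 + z ^ 2) ^ ((3 : ℝ) / 2))) :
    ∃ t : ℝ, 0 < t ∧ x = -(2 * t) ∧ y = t ∧ z = t := by
  have hs6 : (0:ℝ) < Real.sqrt 6 := Real.sqrt_pos.mpr (by norm_num)
  have hpow_pos : 0 < (x ^ 2 + y ^ 2 + z ^ 2) ^ ((3:ℝ)/2) := Real.rpow_pos_of_pos hS _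
  have hneg : x ^ 3 + y ^ 3 + z ^ 3 < 0 := by
    rw [heq]
    have : 0 < (1 / Real.sqrt 6) * (x ^ 2 + y ^ 2 + z ^ 2) ^ ((3:ℝ)/2) := by positivity
    linarith
  have hpow_sq : ((x ^ 2 + y ^ 2 + z ^ 2) ^ ((3:ℝ)/2)) ^ 2 = (x ^ 2 + y ^ 2 + z ^ 2) ^ 3 := by
    rw [← Real.rpow_natCast ((x ^ 2 + y ^ 2 + z ^ 2) ^ ((3:ℝ)/2)) 2, ← Real.rpow_mul hS.le]
    norm_num
  have h6 : (Real.sqrt 6) ^ 2 = 6 := Real.sq_sqrt (by norm_num)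
  have key : (x ^ 2 + y ^ 2 + z ^ 2) ^ 3 = 54 * (x * y * z) ^ 2 := by
    have h1 : (x ^ 3 + y ^ 3 + z ^ 3) ^ 2 =
        (1 / Real.sqrt 6) ^ 2 * ((x ^ 2 + y ^ 2 + z ^ 2) ^ ((3:ℝ)/2)) ^ 2 := by
      rw [heq]; ring
    rw [hpow_sq] at h1
    have h2 : (1 / Real.sqrt 6) ^ 2 = 1 / 6 := by
      rw [div_pow, h6]; norm_num
    rw [h2] at h1
    have h3 : x ^ 3 + y ^ 3 + z ^ 3 = 3 * (x * y * z) := by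
      have hz : z = -(x + y) := by linarith
      rw [hz]; ring
    rw [h3] at h1
    nlinarith [h1]
  have hz : z = -(x + y) := by linarith
  subst hz
  have h0 : ((x - y) * (x + 2 * y) * (2 * x + y)) ^ 2 = 0 := by nlinarith [key]
  have h0' : (x - y) * (x + 2 * y) * (2 * x + y) = 0 := by
    exact pow_eq_zero_iff (by norm_num) |>.mp h0
  have hxyz : x * y * (-(x + y)) < 0 := by nlinarith [hneg]
  clear heq hneg hpow_pos hpow_sq key h0 h6 hs6 hsum
  rcases mul_eq_zero.mp h0' with h' | h3
  · rcases mul_eq_zero.mp h' with h1 | h2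
    · -- x = y
      exfalso
      have hxy' : x = y := by linarith
      nlinarith [hxyz, hyz]
    · -- x = -2y
      have hx : x = -2 * y := by linarith
      have hy3 : 0 < y ^ 3 := by nlinarith [hxyz]
      have hy : 0 < y := by
        by_contra hc
        push_neg at hc
        nlinarith [sq_nonneg y]
      exact ⟨y, hy, by linarith, rfl, by linarith⟩
  · -- y = -2x, z = x : forces x = y = z = 0
    exfalso
    have hy : y = -2 * x := by linarith
    have hx0 : x = 0 := by linarith
    have hy0 : y = 0 := by linarith
    rw [hx0, hy0] at hS
    norm_num at hS

theorem f3_min_case (l1 l2 l3 l4 : ℝ)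
    (h12 : l1 ≤ l2) (h23 : l2 ≤ l3) (h34 : l3 ≤ l4)
    (hsum : l1 + l2 + l3 + l4 = 0) (hprod : l1 * l2 * l3 * l4 = 0)
    (hne : ¬(l1 = 0 ∧ l2 = 0 ∧ l3 = 0 ∧ l4 = 0))
    (heq : l1 ^ 3 + l2 ^ 3 + l3 ^ 3 + l4 ^ 3 =
      -((1 / Real.sqrt 6) * (l1 ^ 2 + l2 ^ 2 + l3 ^ 2 + l4 ^ 2) ^ ((3 : ℝ) / 2))) :
    ∃ l : ℝ, 0 < l ∧ l1 = -(2 * l) ∧ l2 = 0 ∧ l3 = l ∧ l4 = l := by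
  rcases mul_eq_zero.mp hprod with h' | h4
  · rcases mul_eq_zero.mp h' with h'' | h3
    · rcases mul_eq_zero.mp h'' with h1 | h2
      · -- l1 = 0 : all nonneg, sum 0 ⇒ all zero
        exfalso
        apply hne
        have e2 : l2 = 0 := by nlinarith
        have e3 : l3 = 0 := by nlinarith
        have e4 : l4 = 0 := by nlinarith
        exact ⟨h1, e2, e3, e4⟩
      · -- l2 = 0
        subst h2
        have hS : 0 < l1 ^ 2 + l3 ^ 2 + l4 ^ 2 := by
          rcases lt_or_eq_of_le (by positivity : (0:ℝ) ≤ l1 ^ 2 + l3 ^ 2 + l4 ^ 2) with h | h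
          · exact h
          · exfalso; apply hne
            have e1 : l1 = 0 := by nlinarith
            have e3 : l3 = 0 := by nlinarith
            have e4 : l4 = 0 := by nlinarith
            exact ⟨e1, rfl, e3, e4⟩
        have heq' : l1 ^ 3 + l3 ^ 3 + l4 ^ 3 =
            -((1 / Real.sqrt 6) * (l1 ^ 2 + l3 ^ 2 + l4 ^ 2) ^ ((3 : ℝ) / 2)) := by
          have : l1 ^ 2 + 0 ^ 2 + l3 ^ 2 + l4 ^ 2 = l1 ^ 2 + l3 ^ 2 + l4 ^ 2 := by ring
          rw [this] at heq
          linarith [heq]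
        obtain ⟨t, ht, e1, e3, e4⟩ :=
          triple_case l1 l3 l4 (le_trans h12 h23) h34 (by linarith) hS heq'
        exact ⟨t, ht, e1, rfl, e3, e4⟩
    · -- l3 = 0
      subst h3
      have hS : 0 < l1 ^ 2 + l2 ^ 2 + l4 ^ 2 := by
        rcases lt_or_eq_of_le (by positivity : (0:ℝ) ≤ l1 ^ 2 + l2 ^ 2 + l4 ^ 2) with h | h
        · exact h
        · exfalso; apply hne
          have e1 : l1 = 0 := by nlinarith
          have e2 : l2 = 0 := by nlinarith
          have e4 : l4 = 0 := by nlinarith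
          exact ⟨e1, e2, rfl, e4⟩
      have heq' : l1 ^ 3 + l2 ^ 3 + l4 ^ 3 =
          -((1 / Real.sqrt 6) * (l1 ^ 2 + l2 ^ 2 + l4 ^ 2) ^ ((3 : ℝ) / 2)) := by
        have : l1 ^ 2 + l2 ^ 2 + 0 ^ 2 + l4 ^ 2 = l1 ^ 2 + l2 ^ 2 + l4 ^ 2 := by ring
        rw [this] at heq
        linarith [heq]
      obtain ⟨t, ht, e1, e2, e4⟩ :=
        triple_case l1 l2 l4 h12 (le_trans h23 h34) (by linarith) hS heq'
      exfalso; linarith [h23, ht, e2]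
  · -- l4 = 0 : all nonpos, sum 0 ⇒ all zero
    exfalso
    apply hne
    have e3 : l3 = 0 := by nlinarith
    have e2 : l2 = 0 := by nlinarith
    have e1 : l1 = 0 := by nlinarith
    exact ⟨e1, e2, e3, h4⟩
end

section
/- Let λ₁ ≤ λ₂ ≤ λ₃ ≤ λ₄ be real numbers with λ₁ + λ₂ + λ₃ + λ₄ = 0, λ₁·λ₂·λ₃·λ₄ = 0, and suppose that −(1/√6)·(λ₁² + λ₂² + λ₃² + λ₄²)^{3/2} < λ₁³ + λ₂³ + λ₃³ + λ₄³ < 0. Then λ₁ < λ₂ = 0 < λ₃ < λ₄. -/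
theorem f3_negative_case (l1 l2 l3 l4 : ℝ)
    (h12 : l1 ≤ l2) (h23 : l2 ≤ l3) (h34 : l3 ≤ l4)
    (hsum : l1 + l2 + l3 + l4 = 0) (hprod : l1 * l2 * l3 * l4 = 0)
    (hlow : -((1 / Real.sqrt 6) * (l1 ^ 2 + l2 ^ 2 + l3 ^ 2 + l4 ^ 2) ^ ((3 : ℝ) / 2)) <
      l1 ^ 3 + l2 ^ 3 + l3 ^ 3 + l4 ^ 3)
    (hneg : l1 ^ 3 + l2 ^ 3 + l3 ^ 3 + l4 ^ 3 < 0) :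
    l1 < l2 ∧ l2 = 0 ∧ 0 < l3 ∧ l3 < l4 := by
  have hl2 : l2 = 0 := by
    rcases mul_eq_zero.mp hprod with h | h4
    · rcases mul_eq_zero.mp h with h | h3
      · rcases mul_eq_zero.mp h with h1 | h2
        · -- l1 = 0 forces all zero
          nlinarith [sq_nonneg l2, sq_nonneg l3, sq_nonneg l4]
        · exact h2
      · -- l3 = 0 : f3 = -3 l1 l2 (l1+l2) ≥ 0
        exfalso
        subst h3
        have h4e : l4 = -l1 - l2 := by linarith
        subst h4e
        have h2n : l2 ≤ 0 := by linarith
        have h1n : l1 ≤ 0 := le_trans h12 h2n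
        nlinarith [mul_nonneg (mul_nonneg (neg_nonneg.mpr h1n) (neg_nonneg.mpr h2n))
          (neg_nonneg.mpr (by linarith : l1 + l2 ≤ 0))]
    · -- l4 = 0 forces all zero
      exfalso
      have h3n : l3 ≤ 0 := by linarith
      have h2n : l2 ≤ 0 := le_trans h23 h3n
      have h1n : l1 ≤ 0 := le_trans h12 h2n
      have e1 : l1 = 0 := by linarith
      have e2 : l2 = 0 := by linarith
      have e3 : l3 = 0 := by linarith
      rw [e1, e2, e3, h4] at hneg; norm_num at hneg
  subst hl2
  have hl3 : 0 < l3 := by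
    rcases lt_or_eq_of_le h23 with h | h
    · exact h
    · exfalso
      have h4e : l4 = -l1 := by linarith
      have : l1 ^ 3 + (0:ℝ) ^ 3 + l3 ^ 3 + l4 ^ 3 = 0 := by rw [← h, h4e]; ring
      linarith
  have hl1 : l1 < 0 := by linarith
  refine ⟨hl1, rfl, hl3, ?_⟩
  by_contra hc
  have h43 : l4 = l3 := le_antisymm (not_lt.mp hc) h34
  have h1e : l1 = -(2*l3) := by linarith
  have hs : l1 ^ 2 + (0:ℝ) ^ 2 + l3 ^ 2 + l4 ^ 2 = (Real.sqrt 6 * l3) ^ 2 := by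
    rw [h43, h1e, mul_pow, Real.sq_sqrt (by norm_num : (0:ℝ) ≤ 6)]
    ring
  have hf : l1 ^ 3 + (0:ℝ) ^ 3 + l3 ^ 3 + l4 ^ 3 = -(6 * l3 ^ 3) := by
    rw [h43, h1e]; ring
  rw [hs, hf] at hlow
  have hx : (0:ℝ) ≤ Real.sqrt 6 * l3 := by positivity
  have key : ((Real.sqrt 6 * l3) ^ 2 : ℝ) ^ ((3:ℝ)/2) = (Real.sqrt 6 * l3) ^ 3 := by
    rw [← Real.rpow_natCast (Real.sqrt 6 * l3) 2, ← Real.rpow_mul hx]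
    norm_num
  rw [key] at hlow
  have hs6 : Real.sqrt 6 * Real.sqrt 6 = 6 := Real.mul_self_sqrt (by norm_num)
  have hpos : (0:ℝ) < Real.sqrt 6 := Real.sqrt_pos.mpr (by norm_num)
  have : -((1 / Real.sqrt 6) * (Real.sqrt 6 * l3) ^ 3) = -(6 * l3 ^ 3) := by
    field_simp
    linear_combination (-1 : ℝ) * hs6
  rw [this] at hlow
  exact lt_irrefl _ hlow
end

section
/- Let λ₁ ≤ λ₂ ≤ λ₃ ≤ λ₄ be real numbers with λ₁ + λ₂ + λ₃ + λ₄ = 0, λ₁·λ₂·λ₃·λ₄ = 0, and suppose that 0 < λ₁³ + λ₂³ + λ₃³ + λ₄³ < (1/√6)·(λ₁² + λ₂² + λ₃² + λ₄²)^{3/2}. Then there exist real numbers λ > μ > 0 such that λ₁ = −λ, λ₂ = −μ, λ₃ = 0 and λ₄ = λ + μ; in particular λ₁ < λ₂ < λ₃ = 0 < λ₄. -/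
theorem f3_positive_case (l1 l2 l3 l4 : ℝ)
    (h12 : l1 ≤ l2) (h23 : l2 ≤ l3) (h34 : l3 ≤ l4)
    (hsum : l1 + l2 + l3 + l4 = 0) (hprod : l1 * l2 * l3 * l4 = 0)
    (hpos : 0 < l1 ^ 3 + l2 ^ 3 + l3 ^ 3 + l4 ^ 3)
    (hupp : l1 ^ 3 + l2 ^ 3 + l3 ^ 3 + l4 ^ 3 <
      (1 / Real.sqrt 6) * (l1 ^ 2 + l2 ^ 2 + l3 ^ 2 + l4 ^ 2) ^ ((3 : ℝ) / 2)) :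
    (∃ l m : ℝ, m < l ∧ 0 < m ∧ l1 = -l ∧ l2 = -m ∧ l3 = 0 ∧ l4 = l + m) ∧
      (l1 < l2 ∧ l2 < l3 ∧ l3 = 0 ∧ 0 < l4) := by
  have h30 : l3 = 0 := by
    rcases mul_eq_zero.mp hprod with h | h4
    · rcases mul_eq_zero.mp h with h | h3
      · rcases mul_eq_zero.mp h with h1 | h2
        · -- l1 = 0 : all nonneg, sum 0 → all 0
          exfalso
          have : l2 = 0 := by linarith
          have : l3 = 0 := by linarith
          have : l4 = 0 := by linarith
          subst h1; nlinarith
        · -- l2 = 0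
          rcases eq_or_lt_of_le (h2 ▸ h23 : (0:ℝ) ≤ l3) with h | h
          · exact h.symm
          · exfalso
            have h1e : l1 = -(l3 + l4) := by linarith
            have h4p : 0 < l4 := lt_of_lt_of_le h h34
            have key : l1 ^ 3 + l2 ^ 3 + l3 ^ 3 + l4 ^ 3 = -3 * (l3 * l4 * (l3 + l4)) := by
              rw [h1e, h2]; ring
            rw [key] at hpos
            nlinarith [mul_pos (mul_pos h h4p) (by linarith : (0:ℝ) < l3 + l4)]
      · exact h3
    · -- l4 = 0 : all nonpos, sum 0 → all 0
      exfalso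
      have h3z : l3 = 0 := by linarith
      have h2z : l2 = 0 := by linarith
      have h1z : l1 = 0 := by linarith
      subst h4; subst h3z; subst h2z; subst h1z; norm_num at hpos
  subst h30
  have h4e : l4 = -(l1 + l2) := by linarith
  have h2neg : l2 < 0 := by
    rcases eq_or_lt_of_le h23 with h | h
    · exfalso
      have h1e : l1 = -l4 := by linarith
      rw [h1e, ← h] at hpos
      nlinarith
    · exact h
  have h4pos : 0 < l4 := by
    by_contra h
    push_neg at h
    have h1e : l1 = -(l2 + l4) := by linarith
    nlinarith [mul_pos (neg_pos.mpr h2neg) (neg_pos.mpr h2neg)]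
  have h1neg : l1 < 0 := by linarith
  have h12s : l1 < l2 := by
    rcases eq_or_lt_of_le h12 with h | h
    · exfalso
      -- l1 = l2, l4 = -2 l2
      have h4v : l4 = -2 * l2 := by linarith
      have hμpos : 0 < -l2 := by linarith
      have hS : l1 ^ 2 + l2 ^ 2 + 0 ^ 2 + l4 ^ 2 = 6 * (-l2) ^ 2 := by
        rw [h, h4v]; ring
      have h6 : Real.sqrt 6 ^ 2 = 6 := Real.sq_sqrt (by norm_num)
      have h6pos : (0:ℝ) < Real.sqrt 6 := Real.sqrt_pos.mpr (by norm_num)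
      have hrp : (6 * (-l2) ^ 2 : ℝ) ^ ((3:ℝ)/2) = 6 * Real.sqrt 6 * (-l2) ^ 3 := by
        have hx : (0:ℝ) ≤ 6 * (-l2) ^ 2 := by positivity
        have h32 : ((3:ℝ)/2) = (3:ℕ) * ((1:ℝ)/2) := by norm_num
        rw [h32, Real.rpow_mul hx, Real.rpow_natCast, ← Real.sqrt_eq_rpow]
        have hval : ((6 * (-l2) ^ 2) ^ 3 : ℝ) = (6 * Real.sqrt 6 * (-l2) ^ 3) ^ 2 := by
          nlinarith [h6]
        rw [hval, Real.sqrt_sq (by positivity)]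
      rw [hS, hrp] at hupp
      have hLHS : l1 ^ 3 + l2 ^ 3 + (0:ℝ) ^ 3 + l4 ^ 3 = 6 * (-l2) ^ 3 := by
        rw [h, h4v]; ring
      rw [hLHS] at hupp
      have : (1 / Real.sqrt 6) * (6 * Real.sqrt 6 * (-l2) ^ 3) = 6 * (-l2) ^ 3 := by
        field_simp
      rw [this] at hupp
      exact lt_irrefl _ hupp
    · exact h
  refine ⟨⟨-l1, -l2, by linarith, by linarith, by ring, by ring, rfl, by linarith⟩,
    h12s, h2neg, rfl, h4pos⟩
end

section
/- Let λ₁, λ₂, λ₃, λ₄ be real numbers with λ₁ + λ₂ + λ₃ + λ₄ = 0, set S = λ₁² + λ₂² + λ₃² + λ₄², and let t₁₂₃, t₁₂₄, t₁₃₄, t₂₃₄ be real numbers. Define 𝒜 = 2·∑_{1≤i<j<k≤4} (λᵢ² + λⱼ² + λ_k²)·t_{ijk}² and ℬ = 2·∑_{1≤i<j<k≤4} (λᵢλⱼ + λᵢλ_k + λⱼλ_k)·t_{ijk}². If 6·(t₁₂₃² + t₁₂₄² + t₁₃₄² + t₂₃₄²) = S·(S + 4) and 2𝒜 + ℬ =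 (1/2)·(4 + S)·S², then λ₄t₁₂₃ = 0, λ₃t₁₂₄ = 0, λ₂t₁₃₄ = 0 and λ₁t₂₃₄ = 0. -/
theorem vanishing_products (l1 l2 l3 l4 : ℝ)
    (hsum : l1 + l2 + l3 + l4 = 0)
    (S : ℝ) (hS : S = l1 ^ 2 + l2 ^ 2 + l3 ^ 2 + l4 ^ 2)
    (t123 t124 t134 t234 : ℝ)
    (hSimons : 6 * (t123 ^ 2 + t124 ^ 2 + t134 ^ 2 + t234 ^ 2) = S * (S + 4))
    (hAB : 2 * (2 * ((l1 ^ 2 + l2 ^ 2 + l3 ^ 2) * t123 ^ 2 + (l1 ^ 2 + l2 ^ 2 + l4 ^ 2) * t124 ^ 2 +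
        (l1 ^ 2 + l3 ^ 2 + l4 ^ 2) * t134 ^ 2 + (l2 ^ 2 + l3 ^ 2 + l4 ^ 2) * t234 ^ 2)) +
      2 * ((l1 * l2 + l1 * l3 + l2 * l3) * t123 ^ 2 + (l1 * l2 + l1 * l4 + l2 * l4) * t124 ^ 2 +
        (l1 * l3 + l1 * l4 + l3 * l4) * t134 ^ 2 + (l2 * l3 + l2 * l4 + l3 * l4) * t234 ^ 2) =
      (1 / 2) * (4 + S) * S ^ 2) :
    l4 * t123 = 0 ∧ l3 * t124 = 0 ∧ l2 * t134 = 0 ∧ l1 * t234 = 0 := by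
  have key : (l4 * t123) ^ 2 + (l3 * t124) ^ 2 + (l2 * t134) ^ 2 + (l1 * t234) ^ 2 = 0 := by
    have h4 : l4 = -(l1 + l2 + l3) := by linarith
    subst hS h4
    linear_combination ((l1^2+l2^2+l3^2+(-(l1+l2+l3))^2)/4) * hSimons - (1/2) * hAB
  have h1 : (l4 * t123) ^ 2 = 0 := by linarith [sq_nonneg (l3*t124), sq_nonneg (l2*t134), sq_nonneg (l1*t234), sq_nonneg (l4*t123)]
  have h2 : (l3 * t124) ^ 2 = 0 := by linarith [sq_nonneg (l3*t124), sq_nonneg (l2*t134), sq_nonneg (l1*t234), sq_nonneg (l4*t123)]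
  have h3 : (l2 * t134) ^ 2 = 0 := by linarith [sq_nonneg (l3*t124), sq_nonneg (l2*t134), sq_nonneg (l1*t234), sq_nonneg (l4*t123)]
  have h4 : (l1 * t234) ^ 2 = 0 := by linarith [sq_nonneg (l3*t124), sq_nonneg (l2*t134), sq_nonneg (l1*t234), sq_nonneg (l4*t123)]
  exact ⟨pow_eq_zero_iff two_ne_zero |>.mp h1, pow_eq_zero_iff two_ne_zero |>.mp h2,
    pow_eq_zero_iff two_ne_zero |>.mp h3, pow_eq_zero_iff two_ne_zero |>.mp h4⟩
end

section
/- Let λ > μ > 0 be real numbers, let D be a real number, and set S = 2(λ² + λμ + μ²). If real numbers x₁, x₂, x₃, x₄ satisfy x₁ + x₂ + x₃ + x₄ = 0, −λx₁ − μx₂ + (λ + μ)x₄ = −D/3, and −λ³x₁ − μ³x₂ + (λ + μ)³x₄ = −(S/6)·D, then x₃ = 0. -/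
theorem h33kk_vanishes (l m : ℝ) (hlm : m < l) (hm : 0 < m) (D : ℝ)
    (S : ℝ) (hS : S = 2 * (l ^ 2 + l * m + m ^ 2))
    (x1 x2 x3 x4 : ℝ)
    (h0 : x1 + x2 + x3 + x4 = 0)
    (h1 : -l * x1 - m * x2 + (l + m) * x4 = -D / 3)
    (h3 : -l ^ 3 * x1 - m ^ 3 * x2 + (l + m) ^ 3 * x4 = -(S / 6) * D) :
    x3 = 0 := by
  subst hS
  have key : l * m * (l + m) * (x1 + x2 + x4) = 0 := by
    linear_combination h3 - (l ^ 2 + l * m + m ^ 2) * h1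
  have hl : 0 < l := hm.trans hlm
  have hne : l * m * (l + m) ≠ 0 := by positivity
  have : x1 + x2 + x4 = 0 := by
    rcases mul_eq_zero.mp key with h | h
    · exact absurd h hne
    · exact h
  linarith
end

section
/- There do not exist real numbers λ > μ > 0 and real numbers x₂, x₃ such that, setting x₁ = λ and x₄ = −(λ + μ), the equations x₁ + x₂ + x₃ + x₄ = 0, −λx₁ − μx₂ + (λ + μ)x₄ = 0, and −λ³x₁ − μ³x₂ + (λ + μ)³x₄ = 0 all hold. -/
theorem final_contradiction_case3ii :
    ¬ ∃ (l m x2 x3 : ℝ), m < l ∧ 0 < m ∧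
      (l + x2 + x3 + -(l + m) = 0) ∧
      (-l * l - m * x2 + (l + m) * (-(l + m)) = 0) ∧
      (-l ^ 3 * l - m ^ 3 * x2 + (l + m) ^ 3 * (-(l + m)) = 0) := by
  rintro ⟨l, m, x2, x3, hml, hm, h1, h2, h3⟩
  nlinarith [sq_nonneg (l - m), sq_nonneg (l + m), mul_pos hm (hm.trans hml), sq_nonneg l, sq_nonneg m, mul_pos (hm.trans hml) (hm.trans hml)]
end
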